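/- Let a ∈ (0,∞], I = [0,a), let F₁ and F₂ be admissible on I, and let Ω be a convex domain in ℝⁿ (n ≥ 1). If C_Ω[F₂] ⊆ C_Ω[F₁] (F₁-concavity is weaker than F₂-concavity in A_Ω(I)) and lim_{r→0+} F₂(r) = -∞, then lim_{r→0+} F₁(r) = -∞. -/

import Mathlib

open Set Filter
open scoped ENNReal Topology

noncomputable section

/-- The interval `I = [0,a)` for `a ∈ (0,∞]`, as a subset of `ℝ`. -/
def intervalI (a : ℝ≥0∞) : Set ℝ := {r : ℝ | 0 ≤ r ∧ ENNReal.ofReal r < a}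

/-- The interior `(0,a)` of `I = [0,a)`. -/
def intervalI₀ (a : ℝ≥0∞) : Set ℝ := {r : ℝ | 0 < r ∧ ENNReal.ofReal r < a}

/-- `F : I → [-∞,∞)` is admissible on `I = [0,a)`: continuous on `(0,a)`,
strictly increasing on `I`, `F(0) = -∞`, and never `+∞` on `I`. -/
structure IsAdmissible (a : ℝ≥0∞) (F : ℝ → EReal) : Prop where
  continuousOn : ContinuousOn F (intervalI₀ a)
  strictMonoOn : StrictMonoOn F (intervalI a)
  map_zero : F 0 = ⊥
  lt_top : ∀ r ∈ intervalI a, F r < ⊤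

/-- `f` is `F`-concave on `Ω`:
`F(f((1-λ)x+λy)) ≥ (1-λ)F(f(x)) + λF(f(y))` for `x,y ∈ Ω`, `λ ∈ (0,1)`. -/
def FConcaveOn {E : Type*} [AddCommGroup E] [Module ℝ E]
    (F : ℝ → EReal) (Ω : Set E) (f : E → ℝ) : Prop :=
  ∀ x ∈ Ω, ∀ y ∈ Ω, ∀ lam : ℝ, lam ∈ Ioo (0:ℝ) 1 →
    ((1 - lam : ℝ) : EReal) * F (f x) + (lam : EReal) * F (f y)
      ≤ F (f ((1 - lam) • x + lam • y))

/-- `C_Ω[F]`: the set of `F`-concave functions on `Ω` with values in `I = [0,a)`. -/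
def CSet {E : Type*} [AddCommGroup E] [Module ℝ E]
    (a : ℝ≥0∞) (F : ℝ → EReal) (Ω : Set E) : Set (E → ℝ) :=
  {f | MapsTo f Ω (intervalI a) ∧ FConcaveOn F Ω f}

set_option maxHeartbeats 1000000

/-- if `F₁`-concavity is weaker than `F₂`-concavity in `A_Ω(I)`
(i.e. `C_Ω[F₂] ⊆ C_Ω[F₁]`) and `lim_{r→0+} F₂(r) = -∞`, then
`lim_{r→0+} F₁(r) = -∞`. -/
theorem stmt3 {n : ℕ} (hn : 1 ≤ n) (a : ℝ≥0∞) (ha : 0 < a)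
    (F₁ F₂ : ℝ → EReal) (hF₁ : IsAdmissible a F₁) (hF₂ : IsAdmissible a F₂)
    (Ω : Set (EuclideanSpace ℝ (Fin n)))
    (hΩconv : Convex ℝ Ω) (hΩopen : IsOpen Ω) (hΩne : Ω.Nonempty)
    (hsub : CSet a F₂ Ω ⊆ CSet a F₁ Ω)
    (hlim₂ : Tendsto F₂ (𝓝[>] (0:ℝ)) (𝓝 ⊥)) :
    Tendsto F₁ (𝓝[>] (0:ℝ)) (𝓝 ⊥) := by
  classical
  -- choose c ∈ (0,a)
  obtain ⟨c', hc'0, hc'a⟩ := exists_between ha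
  have hc'top : c' ≠ ⊤ := (hc'a.trans_le le_top).ne
  obtain ⟨c, hcdef⟩ : ∃ c : ℝ, c = c'.toReal := ⟨_, rfl⟩
  have hc0 : 0 < c := hcdef ▸ ENNReal.toReal_pos hc'0.ne' hc'top
  have hca : ENNReal.ofReal c < a := by
    rw [hcdef, ENNReal.ofReal_toReal hc'top]; exact hc'a
  have hmemI : ∀ r : ℝ, 0 ≤ r → r ≤ c → r ∈ intervalI a := fun r h0 h1 =>
    ⟨h0, lt_of_le_of_lt (ENNReal.ofReal_le_ofReal h1) hca⟩
  have h0I : (0:ℝ) ∈ intervalI a := ⟨le_refl 0, by simpa using ha⟩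
  -- admissible functions take real values on (0,c]
  have hFreal : ∀ (F : ℝ → EReal), IsAdmissible a F → ∀ r : ℝ, 0 < r → r ≤ c →
      F r = ((F r).toReal : EReal) := by
    intro F hF r h0 h1
    have hb : ⊥ < F r := by
      have := hF.strictMonoOn h0I (hmemI r h0.le h1) h0
      rwa [hF.map_zero] at this
    exact (EReal.coe_toReal (hF.lt_top r (hmemI r h0.le h1)).ne hb.ne').symm
  obtain ⟨d, hddef⟩ : ∃ d : ℝ, d = c/2 := ⟨_, rfl⟩
  have hd0 : 0 < d := by rw [hddef]; positivity
  have hdc : d < c := by rw [hddef]; linarith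
  obtain ⟨M₂, hM₂def⟩ : ∃ m : ℝ, m = (F₂ c).toReal := ⟨_, rfl⟩
  have hF₂c : F₂ c = (M₂ : EReal) := by rw [hM₂def]; exact hFreal F₂ hF₂ c hc0 le_rfl
  -- key surjectivity lemma
  have key : ∀ t : ℝ, t ≤ M₂ → ∃ r : ℝ, 0 < r ∧ r ≤ c ∧ F₂ r = (t : EReal) := by
    intro t ht
    have hev : ∀ᶠ r in 𝓝[>] (0:ℝ), F₂ r < (t : EReal) :=
      hlim₂ (Iio_mem_nhds (by exact EReal.bot_lt_coe t))
    have hm : ∀ᶠ r in 𝓝[>] (0:ℝ), r ∈ Ioo (0:ℝ) c := by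
      filter_upwards [Ioo_mem_nhdsGT_of_mem (left_mem_Ico.2 hc0)] with s hs using hs
    obtain ⟨r₀, hr₀t, hr₀I⟩ := (hev.and hm).exists
    have hcont : ContinuousOn F₂ (Icc r₀ c) := by
      apply hF₂.continuousOn.mono
      intro r hr
      exact ⟨lt_of_lt_of_le hr₀I.1 hr.1,
        lt_of_le_of_lt (ENNReal.ofReal_le_ofReal hr.2) hca⟩
    have hivt := intermediate_value_Icc (le_of_lt hr₀I.2) hcont
    have hmem : (t : EReal) ∈ Icc (F₂ r₀) (F₂ c) := by
      refine ⟨hr₀t.le, ?_⟩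
      rw [hF₂c]; exact_mod_cast ht
    obtain ⟨r, hr, hrt⟩ := hivt hmem
    exact ⟨r, lt_of_lt_of_le hr₀I.1 hr.1, hr.2, hrt⟩
  -- the inverse-type function g
  have keyg : ∀ t : ℝ, ∃ r : ℝ, 0 < r ∧ r ≤ c ∧ (t ≤ M₂ → F₂ r = (t : EReal)) := by
    intro t
    by_cases h : t ≤ M₂
    · obtain ⟨r, h1, h2, h3⟩ := key t h; exact ⟨r, h1, h2, fun _ => h3⟩
    · exact ⟨c, hc0, le_rfl, fun h' => absurd h' h⟩
  choose g hg0 hgc hgF using keyg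
  have hginj : ∀ t : ℝ, t ≤ M₂ → ∀ r : ℝ, 0 < r → r ≤ c → F₂ r = (t : EReal) → g t = r := by
    intro t ht r h0 h1 hFr
    exact hF₂.strictMonoOn.injOn (hmemI _ (hg0 t).le (hgc t)) (hmemI r h0.le h1)
      ((hgF t ht).trans hFr.symm)
  -- main contradiction argument
  rw [EReal.tendsto_nhds_bot_iff_real]
  by_contra hcon
  push_neg at hcon
  obtain ⟨X, hX⟩ := hcon
  obtain ⟨C₁, hC₁def⟩ : ∃ v : ℝ, v = (F₁ c).toReal := ⟨_, rfl⟩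
  obtain ⟨D₁, hD₁def⟩ : ∃ v : ℝ, v = (F₁ d).toReal := ⟨_, rfl⟩
  have hF₁c : F₁ c = (C₁ : EReal) := by rw [hC₁def]; exact hFreal F₁ hF₁ c hc0 le_rfl
  have hF₁d : F₁ d = (D₁ : EReal) := by rw [hD₁def]; exact hFreal F₁ hF₁ d hd0 hdc.le
  have hDC : D₁ < C₁ := by
    have h := hF₁.strictMonoOn (hmemI d hd0.le hdc.le) (hmemI c hc0.le le_rfl) hdc
    rw [hF₁d, hF₁c] at h; exact_mod_cast h
  obtain ⟨M, hMdef⟩ : ∃ m : ℝ, m = min X (D₁ - 1) := ⟨_, rfl⟩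
  have hMD : M < D₁ := by
    rw [hMdef]; exact lt_of_le_of_lt (min_le_right _ _) (by linarith)
  have hMlb : ∀ r : ℝ, 0 < r → r ≤ c → (M : EReal) ≤ F₁ r := by
    intro r h0 h1
    have hm : ∀ᶠ s in 𝓝[>] (0:ℝ), s ∈ Ioo (0:ℝ) r := by
      filter_upwards [Ioo_mem_nhdsGT_of_mem (left_mem_Ico.2 h0)] with s hs using hs
    obtain ⟨s, hs, hsI⟩ := (hX.and_eventually hm).exists
    have hsr : F₁ s < F₁ r :=
      hF₁.strictMonoOn (hmemI s hsI.1.le (le_of_lt (lt_of_lt_of_le hsI.2 h1)))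
        (hmemI r h0.le h1) hsI.2
    have hMX : M ≤ X := by rw [hMdef]; exact min_le_left _ _
    calc (M : EReal) ≤ (X : EReal) := by exact_mod_cast hMX
      _ ≤ F₁ s := hs
      _ ≤ F₁ r := hsr.le
  -- parameters
  obtain ⟨t1, ht1def⟩ : ∃ v : ℝ, v = (F₂ d).toReal := ⟨_, rfl⟩
  have hF₂d : F₂ d = (t1 : EReal) := by rw [ht1def]; exact hFreal F₂ hF₂ d hd0 hdc.le
  have ht12 : t1 < M₂ := by
    have h := hF₂.strictMonoOn (hmemI d hd0.le hdc.le) (hmemI c hc0.le le_rfl) hdc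
    rw [hF₂d, hF₂c] at h; exact_mod_cast h
  have hCM : 0 < C₁ - M := by linarith
  obtain ⟨lam0, hlam0def⟩ : ∃ v : ℝ, v = (D₁ - M)/(C₁ - M) := ⟨_, rfl⟩
  have hl00 : 0 < lam0 := by rw [hlam0def]; exact div_pos (by linarith) hCM
  have hl01 : lam0 < 1 := by rw [hlam0def]; exact (div_lt_one hCM).2 (by linarith)
  obtain ⟨lam, hlamdef⟩ : ∃ v : ℝ, v = (lam0 + 1)/2 := ⟨_, rfl⟩
  have hlaml : lam0 < lam := by rw [hlamdef]; linarith
  have hlam0 : 0 < lam := lt_trans hl00 hlaml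
  have hlam1 : lam < 1 := by rw [hlamdef]; linarith
  have h1lam : 0 < 1 - lam := by linarith
  obtain ⟨t0, ht0def⟩ : ∃ v : ℝ, v = (t1 - lam * M₂)/(1 - lam) := ⟨_, rfl⟩
  have hcomb : (1 - lam) * t0 + lam * M₂ = t1 := by
    rw [ht0def]; field_simp; ring
  have ht01 : t0 < t1 := by
    rw [ht0def, div_lt_iff₀ h1lam]; nlinarith
  have ht0M : t0 ≤ M₂ := by linarith
  -- geometry
  obtain ⟨x₀, hx₀⟩ := hΩne
  obtain ⟨δ, hδ0, hball⟩ := Metric.isOpen_iff.1 hΩopen x₀ hx₀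
  obtain ⟨i0, hi0def⟩ : ∃ i : Fin n, i = ⟨0, hn⟩ := ⟨_, rfl⟩
  obtain ⟨e, hedef⟩ : ∃ v : EuclideanSpace ℝ (Fin n), v = EuclideanSpace.single i0 (1:ℝ) :=
    ⟨_, rfl⟩
  obtain ⟨ρ, hρdef⟩ : ∃ v : ℝ, v = δ/2 := ⟨_, rfl⟩
  have hρ0 : 0 < ρ := by rw [hρdef]; linarith
  have hmemΩ : ∀ t : ℝ, |t| ≤ ρ → x₀ + t • e ∈ Ω := by
    intro t ht
    apply hball
    rw [Metric.mem_ball, dist_eq_norm, add_sub_cancel_left, norm_smul, hedef,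
      EuclideanSpace.norm_single]
    simp only [norm_one, mul_one]
    calc ‖t‖ = |t| := rfl
      _ ≤ ρ := ht
      _ < δ := by rw [hρdef] at ht ⊢; linarith [abs_nonneg t]
  obtain ⟨k, hkdef⟩ : ∃ v : ℝ, v = (M₂ - t0)/(2*ρ) := ⟨_, rfl⟩
  obtain ⟨b, hbdef⟩ : ∃ v : ℝ, v = (t0 + M₂)/2 := ⟨_, rfl⟩
  obtain ⟨L, hLdef⟩ : ∃ L : EuclideanSpace ℝ (Fin n) → ℝ,
      L = fun p => k * (p i0 - x₀ i0) + b := ⟨_, rfl⟩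
  have hLaff : ∀ p q : EuclideanSpace ℝ (Fin n), ∀ s : ℝ,
      L ((1-s) • p + s • q) = (1-s) * L p + s * L q := by
    intro p q s
    simp only [hLdef, PiLp.add_apply, PiLp.smul_apply, smul_eq_mul]
    ring
  have hLt : ∀ t : ℝ, L (x₀ + t • e) = k * t + b := by
    intro t
    simp only [hLdef, hedef, PiLp.add_apply, PiLp.smul_apply, smul_eq_mul,
      EuclideanSpace.single_apply]
    norm_num
  obtain ⟨x, hxdef⟩ : ∃ v : EuclideanSpace ℝ (Fin n), v = x₀ + (-ρ) • e := ⟨_, rfl⟩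
  obtain ⟨y, hydef⟩ : ∃ v : EuclideanSpace ℝ (Fin n), v = x₀ + ρ • e := ⟨_, rfl⟩
  have hx : x ∈ Ω := by rw [hxdef]; exact hmemΩ _ (by rw [abs_neg, abs_of_pos hρ0])
  have hy : y ∈ Ω := by rw [hydef]; exact hmemΩ _ (le_of_eq (abs_of_pos hρ0))
  have hρne : ρ ≠ 0 := hρ0.ne'
  have hLx : L x = t0 := by
    rw [hxdef, hLt, hkdef, hbdef]; field_simp; ring
  have hLy : L y = M₂ := by
    rw [hydef, hLt, hkdef, hbdef]; field_simp; ring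
  -- the test function
  obtain ⟨f, hfdef⟩ : ∃ f : EuclideanSpace ℝ (Fin n) → ℝ,
      f = fun p => g (min (L p) M₂) := ⟨_, rfl⟩
  have hfF₂ : ∀ p, F₂ (f p) = ((min (L p) M₂ : ℝ) : EReal) := by
    intro p; rw [hfdef]; exact hgF _ (min_le_right _ _)
  have hfmem : f ∈ CSet a F₂ Ω := by
    constructor
    · intro p _; rw [hfdef]; exact hmemI _ (hg0 _).le (hgc _)
    · intro p hp q hq s hs
      rw [hfF₂, hfF₂, hfF₂, hLaff, ← EReal.coe_mul, ← EReal.coe_mul, ← EReal.coe_add,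
        EReal.coe_le_coe_iff]
      obtain ⟨hs0, hs1⟩ := hs
      have hs1' : (0:ℝ) ≤ 1 - s := by linarith
      apply le_min
      · exact add_le_add (mul_le_mul_of_nonneg_left (min_le_left _ _) hs1')
          (mul_le_mul_of_nonneg_left (min_le_left _ _) hs0.le)
      · have h1 := mul_le_mul_of_nonneg_left (min_le_right (L p) M₂) hs1'
        have h2 := mul_le_mul_of_nonneg_left (min_le_right (L q) M₂) hs0.le
        linarith
  obtain ⟨-, hfconc₁⟩ := hsub hfmem
  have hineq := hfconc₁ x hx y hy lam ⟨hlam0, hlam1⟩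
  -- compute the three values of f
  have hfx : f x = g t0 := by rw [hfdef]; simp only [hLx, min_eq_left ht0M]
  have hfy : f y = c := by
    rw [hfdef]; simp only [hLy, min_self]
    exact hginj M₂ le_rfl c hc0 le_rfl hF₂c
  have hfz : f ((1 - lam) • x + lam • y) = d := by
    rw [hfdef]; simp only [hLaff, hLx, hLy, hcomb, min_eq_left ht12.le]
    exact hginj t1 ht12.le d hd0 hdc.le hF₂d
  rw [hfx, hfy, hfz, hF₁c, hF₁d] at hineq
  obtain ⟨u, hudef⟩ : ∃ v : ℝ, v = (F₁ (g t0)).toReal := ⟨_, rfl⟩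
  have hF₁u : F₁ (g t0) = (u : EReal) := by
    rw [hudef]; exact hFreal F₁ hF₁ _ (hg0 _) (hgc _)
  have hMu : M ≤ u := by
    have := hMlb (g t0) (hg0 _) (hgc _)
    rw [hF₁u] at this; exact_mod_cast this
  rw [hF₁u, ← EReal.coe_mul, ← EReal.coe_mul, ← EReal.coe_add, EReal.coe_le_coe_iff]
    at hineq
  have hl0mul : lam0 * (C₁ - M) = D₁ - M := by
    rw [hlam0def]; field_simp
  nlinarith [mul_lt_mul_of_pos_right hlaml hCM]
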